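/- arXiv:1307.2677 — 5 statements merged into one kernel-verified Lean document; each statement's English description precedes it below -/
import Mathlib

section
/- Let k ≥ 2 be a natural number, let D > 0, and let d : Fin k → ℝ satisfy ∑_{i} 1/(1 + exp(D · d i)) ≤ 1/2. Then exp(D · d i) > 1 for every i, and for every index i there exists an index j ≠ i such that exp(D · d j) ≥ ((2k − 3)·exp(D · d i) + (2k − 1))/(exp(D · d i) − 1), i.e. d j ≥ (1/D)·log(((2k−3)·exp(D·d i) + (2k−1))/(exp(D·d i) − 1)). -/
/-- Arithmetic content of Lemma 3.5. -/
theorem stmt_2 (k : ℕ) (hk : 2 ≤ k) (D : ℝ) (hD : 0 < D) (d : Fin k → ℝ)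
    (h : ∑ i, 1 / (1 + Real.exp (D * d i)) ≤ 1 / 2) :
    (∀ i : Fin k, 1 < Real.exp (D * d i)) ∧
    (∀ i : Fin k, ∃ j : Fin k, j ≠ i ∧
      ((2 * (k : ℝ) - 3) * Real.exp (D * d i) + (2 * (k : ℝ) - 1)) /
          (Real.exp (D * d i) - 1) ≤ Real.exp (D * d j) ∧
      (1 / D) * Real.log (((2 * (k : ℝ) - 3) * Real.exp (D * d i) + (2 * (k : ℝ) - 1)) /
          (Real.exp (D * d i) - 1)) ≤ d j) := by
  have hKR : (2:ℝ) ≤ (k:ℝ) := by exact_mod_cast hk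
  have hpos : ∀ j : Fin k, 0 < Real.exp (D * d j) := fun j => Real.exp_pos _
  have part1 : ∀ i : Fin k, 1 < Real.exp (D * d i) := by
    intro i
    obtain ⟨j, hj⟩ : ∃ j : Fin k, j ≠ i :=
      Fintype.exists_ne_of_one_lt_card (by simpa using (by omega : 1 < k)) i
    have hsub : ∑ x ∈ ({i, j} : Finset (Fin k)), 1 / (1 + Real.exp (D * d x)) ≤
        ∑ x, 1 / (1 + Real.exp (D * d x)) := by
      apply Finset.sum_le_sum_of_subset_of_nonneg (Finset.subset_univ _)
      intro x _ _
      positivity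
    rw [Finset.sum_pair (Ne.symm hj)] at hsub
    have h2 : 1 / (1 + Real.exp (D * d i)) + 1 / (1 + Real.exp (D * d j)) ≤ 1/2 :=
      le_trans hsub h
    have hji : 0 < 1 / (1 + Real.exp (D * d j)) := by positivity
    have hii : 1 / (1 + Real.exp (D * d i)) < 1/2 := by linarith
    rw [div_lt_div_iff₀ (by positivity) two_pos] at hii
    linarith
  refine ⟨part1, fun i => ?_⟩
  set t := Real.exp (D * d i) with htdef
  have ht : 1 < t := part1 i
  set C : ℝ := ((2 * (k : ℝ) - 3) * t + (2 * (k : ℝ) - 1)) / (t - 1) with hCdef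
  have hCpos : 0 < C := div_pos (by nlinarith) (by linarith)
  have key : ∃ j : Fin k, j ≠ i ∧ C ≤ Real.exp (D * d j) := by
    by_contra hc
    push_neg at hc
    have hlt : ∀ j ∈ Finset.univ.erase i,
        1 / (1 + C) < 1 / (1 + Real.exp (D * d j)) := by
      intro j hj
      have hjne := Finset.ne_of_mem_erase hj
      have h1 := hc j hjne
      exact one_div_lt_one_div_of_lt (by positivity) (by linarith)
    have hne : (Finset.univ.erase i).Nonempty := by
      rw [← Finset.card_pos, Finset.card_erase_of_mem (Finset.mem_univ i),
        Finset.card_univ, Fintype.card_fin]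
      omega
    have hsum := Finset.sum_lt_sum_of_nonempty hne hlt
    rw [Finset.sum_const, Finset.card_erase_of_mem (Finset.mem_univ i),
      Finset.card_univ, Fintype.card_fin, nsmul_eq_mul,
      Nat.cast_sub (by omega : 1 ≤ k), Nat.cast_one] at hsum
    have htot : 1 / (1 + t) + ∑ j ∈ Finset.univ.erase i, 1 / (1 + Real.exp (D * d j)) =
        ∑ j, 1 / (1 + Real.exp (D * d j)) :=
      Finset.add_sum_erase _ (fun j => 1 / (1 + Real.exp (D * d j))) (Finset.mem_univ i)
    have h1 : t - 1 ≠ 0 := by linarith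
    have h2 : t + 1 ≠ 0 := by linarith
    have h1C : 1 + C = (2 * (k:ℝ) - 2) * (t + 1) / (t - 1) := by
      rw [hCdef, eq_div_iff h1, add_mul, div_mul_cancel₀ _ h1]
      ring
    have hval : ((k:ℝ) - 1) * (1 / (1 + C)) = (t - 1) / (2 * (t + 1)) := by
      have h3 : (2 * (k:ℝ) - 2) ≠ 0 := by linarith
      rw [h1C, one_div_div, ← mul_div_assoc,
        div_eq_div_iff (mul_ne_zero h3 h2) (by positivity)]
      ring
    have heq : 1 / (1 + t) + (t - 1) / (2 * (t + 1)) = 1 / 2 := by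
      rw [div_add_div _ _ (by positivity) (by positivity),
        div_eq_div_iff (by positivity) (by norm_num : (2:ℝ) ≠ 0)]
      ring
    linarith
  obtain ⟨j, hjne, hC⟩ := key
  refine ⟨j, hjne, hC, ?_⟩
  have hlog : Real.log C ≤ D * d j := by
    calc Real.log C ≤ Real.log (Real.exp (D * d j)) := Real.log_le_log hCpos hC
    _ = D * d j := Real.log_exp _
  rw [one_div, inv_mul_le_iff₀ hD]
  exact hlog
end

section
/- Let g = [[a,b],[c,d]] be a 2×2 complex matrix with determinant 1 (ad − bc = 1), with c ≠ 0 and a + d ≠ 0. Then there exist z₁, z₂ ∈ ℂ, each a fixed point of the associated Möbius transformation (i.e. c·z_i² + (d − a)·z_i − b = 0 for i = 1, 2), such that |z₁ − a/c| ≤ 2/(|c|·|a + d|) and |z₂ + d/c| ≤ 2/(|c|·|a + d|). -/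
lemma aux_bound (t s : ℂ) (hs : s ^ 2 = t ^ 2 - 4) (hle : ‖t - s‖ ≤ ‖t + s‖)
    (ht : t ≠ 0) : ‖t - s‖ ≤ 4 / ‖t‖ := by
  have h4 : ‖t - s‖ * ‖t + s‖ = 4 := by
    rw [← norm_mul]
    have h : (t - s) * (t + s) = 4 := by linear_combination -hs
    rw [h]; simp
  have htle : ‖t‖ ≤ ‖t + s‖ := by
    have h2 : 2 * ‖t‖ = ‖(t - s) + (t + s)‖ := by
      rw [show (t - s) + (t + s) = 2 * t by ring, norm_mul]; simp
    have := norm_add_le (t - s) (t + s)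
    nlinarith [norm_nonneg t]
  have hpos : 0 < ‖t‖ := by
    simpa [norm_pos_iff] using ht
  have hpos2 : 0 < ‖t + s‖ := lt_of_lt_of_le hpos htle
  rw [show ‖t - s‖ = 4 / ‖t + s‖ by
    field_simp; linarith [h4]]
  exact div_le_div_of_nonneg_left (by norm_num) hpos htle

/-- Quantitative core of Lemma 4.3: the fixed points of the Möbius transformation
associated to `[[a,b],[c,d]] ∈ SL(2,ℂ)` with `c ≠ 0` and trace `a + d ≠ 0` lie
within `2/(|c|·|a+d|)` of the centers `a/c` and `−d/c` of the isometric circles. -/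
theorem stmt_5 (a b c d : ℂ) (hdet : a * d - b * c = 1) (hc : c ≠ 0)
    (htr : a + d ≠ 0) :
    ∃ z₁ z₂ : ℂ,
      c * z₁ ^ 2 + (d - a) * z₁ - b = 0 ∧
      c * z₂ ^ 2 + (d - a) * z₂ - b = 0 ∧
      ‖z₁ - a / c‖ ≤ 2 / (‖c‖ * ‖a + d‖) ∧
      ‖z₂ + d / c‖ ≤ 2 / (‖c‖ * ‖a + d‖) := by
  obtain ⟨s, hs, hle⟩ : ∃ s : ℂ, s ^ 2 = (a + d) ^ 2 - 4 ∧
      ‖(a + d) - s‖ ≤ ‖(a + d) + s‖ := by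
    obtain ⟨w, hw⟩ := IsAlgClosed.exists_pow_nat_eq (k := ℂ) ((a + d) ^ 2 - 4) (n := 2)
      (by norm_num)
    rcases le_total (‖(a + d) - w‖) (‖(a + d) + w‖) with h | h
    · exact ⟨w, hw, h⟩
    · exact ⟨-w, by simpa using hw, by simpa [sub_eq_add_neg] using h⟩
  have hbd := aux_bound (a + d) s hs hle htr
  have htpos : 0 < ‖a + d‖ := by simpa [norm_pos_iff] using htr
  have hcpos : 0 < ‖c‖ := by simpa [norm_pos_iff] using hc
  have hkey : ‖(a + d) - s‖ * ‖a + d‖ ≤ 4 := by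
    rwa [le_div_iff₀ htpos] at hbd
  refine ⟨(a - d + s) / (2 * c), (a - d - s) / (2 * c), ?_, ?_, ?_, ?_⟩
  · field_simp
    linear_combination hs + 4 * hdet
  · field_simp
    linear_combination hs + 4 * hdet
  · have heq : (a - d + s) / (2 * c) - a / c = -((a + d) - s) / (2 * c) := by
      field_simp; ring
    rw [heq, norm_div, norm_neg, norm_mul, Complex.norm_two]
    rw [div_le_div_iff₀ (by positivity) (by positivity)]
    nlinarith [mul_le_mul_of_nonneg_right hkey hcpos.le]
  · have heq : (a - d - s) / (2 * c) + d / c = ((a + d) - s) / (2 * c) := by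
      field_simp; ring
    rw [heq, norm_div, norm_mul, Complex.norm_two]
    rw [div_le_div_iff₀ (by positivity) (by positivity)]
    nlinarith [mul_le_mul_of_nonneg_right hkey hcpos.le]
end

section
/- Let p, q ∈ ℂ with p ≠ q, and let λ ∈ ℂ with |λ| > 1. Let γ : ℂ → ℂ be the Möbius transformation with fixed points p and q obtained by conjugating z ↦ λ²z by ψ(z) = (z − p)/(z − q); explicitly γ(z) = (p·(z − q) − q·λ²·(z − p)) / ((z − q) − λ²·(z − p)). Then there exist centers o, o' ∈ ℂ and radii r, r' > 0 such that: (a) r + r' = |p − q| · 2|λ|/(|λ|² − 1); (b) the closed disks closedBall(o, r) and closedBall(o', r') are disjoint; (c) p ∈ ball(o, r) and q ∈ ball(o', r'); and (d) for every z in the open ball ball(o, r) with (z − q) − λ²(z − p) ≠ 0, one has γ(z) ∉ closedBall(o', r'). In particular, since |λ| > 1, r + r' < |p − q|·(|λ| + 1)/(|λ| − 1). -/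
open Metric

private lemma apollo_poly (p q z : ℂ) (t : ℝ) :
    Complex.normSq (((t:ℂ) - 1) * z - ((t:ℂ) * p - q)) =
      (t - 1) * (t * Complex.normSq (z - p) - Complex.normSq (z - q))
        + t * Complex.normSq (p - q) := by
  simp only [Complex.normSq_apply, Complex.sub_re, Complex.sub_im, Complex.mul_re,
    Complex.mul_im, Complex.ofReal_re, Complex.ofReal_im, Complex.one_re, Complex.one_im]
  ring

private lemma apollo_dist (p q z : ℂ) (a : ℝ) (ha : 1 < a) :
    (dist z ((((a^2 : ℝ):ℂ) * p - q) / (((a^2 : ℝ):ℂ) - 1)))^2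
      = ((a^2 - 1) * (a^2 * Complex.normSq (z - p) - Complex.normSq (z - q))
          + a^2 * Complex.normSq (p - q)) / (a^2-1)^2 := by
  have ht : (1:ℝ) < a ^ 2 := by nlinarith
  have ht0 : (0:ℝ) < a ^ 2 - 1 := by linarith
  have hc : (((a^2 : ℝ):ℂ) - 1) ≠ 0 := sub_ne_zero.mpr (by exact_mod_cast ht.ne')
  set o : ℂ := ((((a^2 : ℝ):ℂ)) * p - q) / (((a^2 : ℝ):ℂ) - 1) with ho
  have h1 : (((a^2 : ℝ):ℂ) - 1) * (z - o) =
      (((a^2 : ℝ):ℂ) - 1) * z - (((a^2 : ℝ):ℂ) * p - q) := by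
    rw [ho, mul_sub, mul_div_cancel₀ _ hc]
  have h2 : ‖(((a^2 : ℝ):ℂ) - 1) * (z - o)‖ =
      (a^2 - 1) * ‖z - o‖ := by
    rw [norm_mul]
    congr 1
    rw [show (((a^2 : ℝ):ℂ) - 1) = (((a^2 - 1 : ℝ)):ℂ) by push_cast; ring,
      Complex.norm_of_nonneg ht0.le]
  have hdist : dist z o =
      ‖(((a^2 : ℝ):ℂ) - 1) * z - (((a^2 : ℝ):ℂ) * p - q)‖ / (a^2 - 1) := by
    rw [Complex.dist_eq, ← h1, h2]
    field_simp
  rw [hdist, div_pow, Complex.sq_norm, apollo_poly]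

private lemma apollo_lt (p q z : ℂ) (a : ℝ) (ha : 1 < a) :
    dist z ((((a^2 : ℝ):ℂ) * p - q) / (((a^2 : ℝ):ℂ) - 1)) <
        a * ‖p - q‖ / (a^2 - 1) ↔
      a * ‖z - p‖ < ‖z - q‖ := by
  have ha0 : 0 < a := lt_trans one_pos ha
  have ht : (1:ℝ) < a ^ 2 := by nlinarith
  have ht0 : (0:ℝ) < a ^ 2 - 1 := by linarith
  rw [show (dist z ((((a^2 : ℝ):ℂ) * p - q) / (((a^2 : ℝ):ℂ) - 1)) <
        a * ‖p - q‖ / (a^2 - 1)) ↔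
      ((dist z ((((a^2 : ℝ):ℂ) * p - q) / (((a^2 : ℝ):ℂ) - 1)))^2 <
        (a * ‖p - q‖ / (a^2 - 1))^2) from
    (pow_lt_pow_iff_left₀ dist_nonneg (by positivity) two_ne_zero).symm,
    show (a * ‖z - p‖ < ‖z - q‖) ↔
      ((a * ‖z - p‖)^2 < (‖z - q‖)^2) from
    (pow_lt_pow_iff_left₀ (by positivity) (norm_nonneg _) two_ne_zero).symm,
    apollo_dist p q z a ha]
  rw [div_pow, mul_pow, Complex.sq_norm, mul_pow, Complex.sq_norm, Complex.sq_norm]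
  have hsq : (0:ℝ) < (a^2-1)^2 := by positivity
  rw [div_lt_div_iff_of_pos_right hsq]
  constructor <;> intro h <;> nlinarith

private lemma apollo_le (p q z : ℂ) (a : ℝ) (ha : 1 < a) :
    dist z ((((a^2 : ℝ):ℂ) * p - q) / (((a^2 : ℝ):ℂ) - 1)) ≤
        a * ‖p - q‖ / (a^2 - 1) ↔
      a * ‖z - p‖ ≤ ‖z - q‖ := by
  have ha0 : 0 < a := lt_trans one_pos ha
  have ht : (1:ℝ) < a ^ 2 := by nlinarith
  have ht0 : (0:ℝ) < a ^ 2 - 1 := by linarith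
  rw [show (dist z ((((a^2 : ℝ):ℂ) * p - q) / (((a^2 : ℝ):ℂ) - 1)) ≤
        a * ‖p - q‖ / (a^2 - 1)) ↔
      ((dist z ((((a^2 : ℝ):ℂ) * p - q) / (((a^2 : ℝ):ℂ) - 1)))^2 ≤
        (a * ‖p - q‖ / (a^2 - 1))^2) from
    (pow_le_pow_iff_left₀ dist_nonneg (by positivity) two_ne_zero).symm,
    show (a * ‖z - p‖ ≤ ‖z - q‖) ↔
      ((a * ‖z - p‖)^2 ≤ (‖z - q‖)^2) from
    (pow_le_pow_iff_left₀ (by positivity) (norm_nonneg _) two_ne_zero).symm,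
    apollo_dist p q z a ha]
  rw [div_pow, mul_pow, Complex.sq_norm, mul_pow, Complex.sq_norm, Complex.sq_norm]
  have hsq : (0:ℝ) < (a^2-1)^2 := by positivity
  rw [div_le_div_iff_of_pos_right hsq]
  constructor <;> intro h <;> nlinarith

/-- Proposition 5.3 (non-iso): disjoint circles for a loxodromic Möbius transformation
with fixed points `p, q` and multiplier `L²`, `|L| > 1`. -/
theorem stmt_6 (p q L : ℂ) (hpq : p ≠ q) (hL : 1 < ‖L‖) :
    ∃ (o o' : ℂ) (r r' : ℝ), 0 < r ∧ 0 < r' ∧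
      r + r' = ‖p - q‖ * (2 * ‖L‖ / (‖L‖ ^ 2 - 1)) ∧
      Disjoint (Metric.closedBall o r) (Metric.closedBall o' r') ∧
      p ∈ Metric.ball o r ∧ q ∈ Metric.ball o' r' ∧
      (∀ z ∈ Metric.ball o r, (z - q) - L ^ 2 * (z - p) ≠ 0 →
        (p * (z - q) - q * L ^ 2 * (z - p)) / ((z - q) - L ^ 2 * (z - p)) ∉
          Metric.closedBall o' r') ∧
      r + r' < ‖p - q‖ * ((‖L‖ + 1) / (‖L‖ - 1)) := by
  set a : ℝ := ‖L‖ with haL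
  have ha0 : 0 < a := lt_trans one_pos hL
  have ht : (1:ℝ) < a ^ 2 := by nlinarith
  have ht0 : (0:ℝ) < a ^ 2 - 1 := by linarith
  have hd : 0 < ‖p - q‖ := by
    rw [norm_pos_iff, sub_ne_zero]; exact hpq
  have hdqp : ‖q - p‖ = ‖p - q‖ := norm_sub_rev q p
  refine ⟨((((a^2 : ℝ):ℂ)) * p - q) / (((a^2 : ℝ):ℂ) - 1),
    ((((a^2 : ℝ):ℂ)) * q - p) / (((a^2 : ℝ):ℂ) - 1),
    a * ‖p - q‖ / (a^2 - 1), a * ‖p - q‖ / (a^2 - 1),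
    by positivity, by positivity, ?_, ?_, ?_, ?_, ?_, ?_⟩
  · field_simp; ring
  · -- disjointness
    rw [Set.disjoint_left]
    intro z hz hz'
    rw [mem_closedBall, apollo_le p q z a hL] at hz
    rw [mem_closedBall, ← hdqp, apollo_le q p z a hL] at hz'
    have n1 : 0 ≤ ‖z - p‖ := norm_nonneg _
    have n2 : 0 ≤ ‖z - q‖ := norm_nonneg _
    have hzp : ‖z - p‖ = 0 := by nlinarith
    have hzq : ‖z - q‖ = 0 := by nlinarith
    have h3 : z = p := by rwa [norm_eq_zero, sub_eq_zero] at hzp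
    have h4 : z = q := by rwa [norm_eq_zero, sub_eq_zero] at hzq
    exact hpq (h3.symm.trans h4)
  · -- p ∈ ball o r
    rw [mem_ball, apollo_lt p q p a hL]
    simpa using hd
  · -- q ∈ ball o' r
    rw [mem_ball, ← hdqp, apollo_lt q p q a hL]
    simpa [hdqp] using hd
  · -- mapping property
    intro z hz hD
    rw [mem_ball, apollo_lt p q z a hL] at hz
    set w : ℂ := (p * (z - q) - q * L ^ 2 * (z - p)) / ((z - q) - L ^ 2 * (z - p)) with hw
    intro hmem
    rw [mem_closedBall, ← hdqp, apollo_le q p w a hL] at hmem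
    have hwp : w - p = L^2 * (z - p) * (p - q) / ((z - q) - L ^ 2 * (z - p)) := by
      rw [hw]; field_simp; ring
    have hwq : w - q = (z - q) * (p - q) / ((z - q) - L ^ 2 * (z - p)) := by
      rw [hw]; field_simp; ring
    have hDa : 0 < ‖(z - q) - L ^ 2 * (z - p)‖ := by
      rwa [norm_pos_iff]
    have hawp : ‖w - p‖ =
        a^2 * ‖z - p‖ * ‖p - q‖
          / ‖(z - q) - L ^ 2 * (z - p)‖ := by
      rw [hwp, norm_div, norm_mul, norm_mul, norm_pow, ← haL]
    have hawq : ‖w - q‖ =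
        ‖z - q‖ * ‖p - q‖
          / ‖(z - q) - L ^ 2 * (z - p)‖ := by
      rw [hwq, norm_div, norm_mul]
    rw [hawp, hawq, ← mul_div_assoc, div_le_div_iff_of_pos_right hDa] at hmem
    have n1 : 0 ≤ ‖z - p‖ := norm_nonneg _
    nlinarith [mul_lt_mul_of_pos_right (mul_lt_mul_of_pos_left hz ha0) hd]
  · -- final inequality
    have e : a * ‖p - q‖ / (a ^ 2 - 1) + a * ‖p - q‖ / (a ^ 2 - 1)
        = ‖p - q‖ * (2 * a / (a^2 - 1)) := by ring
    rw [e]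
    have h1 : (0:ℝ) < a - 1 := by linarith
    have h2 : 2 * a / (a^2 - 1) < (a + 1) / (a - 1) := by
      rw [div_lt_div_iff₀ (by linarith) h1]
      nlinarith
    exact (mul_lt_mul_iff_right₀ hd).mpr h2
end

section
/- Let (D_n), (x_n), (t_n) be sequences of real numbers with D_n > 0 for all n, D_n → 0, x_n > 1 for all n, x_n → 1, and suppose there exists ρ > 0 such that t_n ≥ ρ·((x_n^{2D_n} + 3)/(x_n^{2D_n} − 1))^{1/(2D_n)} for all n. Then 1/(t_n·(x_n² − 1)) → 0, i.e. t_n·(x_n² − 1) → ∞. -/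
open Filter

/-- Analytic core of the first step of the proof of Lemma 7.3 (axes). -/
theorem stmt_12 (D x t : ℕ → ℝ)
    (hD : ∀ n, 0 < D n) (hD0 : Tendsto D atTop (nhds 0))
    (hx : ∀ n, 1 < x n) (hx1 : Tendsto x atTop (nhds 1))
    (ht : ∃ ρ : ℝ, 0 < ρ ∧ ∀ n,
      ρ * ((x n ^ (2 * D n) + 3) / (x n ^ (2 * D n) - 1)) ^ (1 / (2 * D n)) ≤ t n) :
    Tendsto (fun n => 1 / (t n * (x n ^ 2 - 1))) atTop (nhds 0) ∧
    Tendsto (fun n => t n * (x n ^ 2 - 1)) atTop atTop := by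
  obtain ⟨ρ, hρ, hbound⟩ := ht
  have hepos : ∀ n, 0 < x n ^ 2 - 1 := fun n => by nlinarith [hx n]
  have hxsq : Tendsto (fun n => x n ^ 2 - 1) atTop (nhds 0) := by
    have := ((hx1.pow 2).sub_const 1)
    simpa using this
  have hinv : Tendsto (fun n => 1 / (x n ^ 2 - 1)) atTop atTop := by
    simp only [one_div]
    apply Tendsto.inv_tendsto_nhdsGT_zero
    rw [tendsto_nhdsWithin_iff]
    exact ⟨hxsq, Eventually.of_forall hepos⟩
  have hev : ∀ᶠ n in atTop, ρ * (1 / (x n ^ 2 - 1)) ≤ t n * (x n ^ 2 - 1) := by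
    have hDsmall : ∀ᶠ n in atTop, D n ≤ 1 / 4 :=
      hD0.eventually (eventually_le_nhds (by norm_num : (0:ℝ) < 1 / 4))
    have hes : ∀ᶠ n in atTop, x n ^ 2 - 1 ≤ 1 :=
      hxsq.eventually (eventually_le_nhds one_pos)
    filter_upwards [hDsmall, hes] with n hDn hen
    set e := x n ^ 2 - 1 with he_def
    have he : 0 < e := hepos n
    have hx0 : (0:ℝ) < x n := lt_trans one_pos (hx n)
    have hDp : 0 < 2 * D n := by linarith [hD n]
    have hy1 : 1 < x n ^ (2 * D n) :=
      (Real.one_lt_rpow_iff_of_pos hx0).mpr (Or.inl ⟨hx n, hDp⟩)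
    have hy : 0 < x n ^ (2 * D n) - 1 := by linarith
    have hyle : x n ^ (2 * D n) - 1 ≤ e := by
      have h2 : x n ^ (2 * D n) ≤ x n ^ (2:ℝ) :=
        Real.rpow_le_rpow_of_exponent_le (le_of_lt (hx n)) (by linarith)
      rw [Real.rpow_two] at h2
      rw [he_def]; linarith
    have hexp : (0:ℝ) < 1 / (2 * D n) := by positivity
    have step1 : ρ * (1 / (x n ^ (2 * D n) - 1)) ^ (1 / (2 * D n)) ≤ t n := by
      refine le_trans ?_ (hbound n)
      refine mul_le_mul_of_nonneg_left (Real.rpow_le_rpow (by positivity) ?_ hexp.le) hρ.le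
      exact (div_le_div_iff_of_pos_right hy).mpr (by nlinarith)
    have step2 : ρ * (1 / e) ^ (1 / (2 * D n)) ≤ t n := by
      refine le_trans ?_ step1
      exact mul_le_mul_of_nonneg_left
        (Real.rpow_le_rpow (by positivity) (one_div_le_one_div_of_le hy hyle) hexp.le) hρ.le
    have step3 : (1 / e) ^ (2:ℝ) ≤ (1 / e) ^ (1 / (2 * D n)) := by
      apply Real.rpow_le_rpow_of_exponent_le (one_le_one_div he hen)
      rw [le_div_iff₀ hDp]; linarith
    have h4 : (1 / e) ^ (2:ℝ) = (1 / e) ^ 2 := Real.rpow_two _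
    have tlb : ρ * (1 / e) ^ 2 ≤ t n := by
      refine le_trans ?_ step2
      rw [← h4]
      gcongr
    have : ρ * (1 / e) ^ 2 * e ≤ t n * e := by
      apply mul_le_mul_of_nonneg_right tlb he.le
    calc ρ * (1 / e) = ρ * (1 / e) ^ 2 * e := by field_simp
      _ ≤ t n * e := this
  have h2 : Tendsto (fun n => t n * (x n ^ 2 - 1)) atTop atTop :=
    tendsto_atTop_mono' atTop hev (hinv.const_mul_atTop hρ)
  exact ⟨tendsto_const_nhds.div_atTop h2, h2⟩
end

section
/- Let (D_n), (x_n), (t_n) be sequences of real numbers with D_n > 0 for all n, D_n → 0, x_n > 1 for all n, x_n → 1, and suppose there exists ρ > 0 such that t_n ≥ ρ·(((x_n^{2D_n} + 3)·(x_n² − 1)^{2D_n})/(x_n^{2D_n} − 1))^{1/(2D_n)} for all n. Then 1/(t_n·(x_n² − 1)) → 0, i.e. t_n·(x_n² − 1) → ∞. -/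
open Filter

/-- Analytic content of Lemma 7.4 (iso-ratio). -/
theorem stmt_13 (D x t : ℕ → ℝ)
    (hD : ∀ n, 0 < D n) (hD0 : Tendsto D atTop (nhds 0))
    (hx : ∀ n, 1 < x n) (hx1 : Tendsto x atTop (nhds 1))
    (ht : ∃ ρ : ℝ, 0 < ρ ∧ ∀ n,
      ρ * (((x n ^ (2 * D n) + 3) * (x n ^ 2 - 1) ^ (2 * D n)) /
          (x n ^ (2 * D n) - 1)) ^ (1 / (2 * D n)) ≤ t n) :
    Tendsto (fun n => 1 / (t n * (x n ^ 2 - 1))) atTop (nhds 0) ∧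
    Tendsto (fun n => t n * (x n ^ 2 - 1)) atTop atTop := by
  obtain ⟨ρ, hρ, ht⟩ := ht
  have hu : ∀ n, 0 < x n ^ 2 - 1 := fun n => by nlinarith [hx n]
  have hu0 : Tendsto (fun n => x n ^ 2 - 1) atTop (nhds 0) := by
    have h := ((hx1.pow 2).sub_const 1)
    simpa using h
  have hmain : ∀ᶠ n in atTop, ρ / (x n ^ 2 - 1) ≤ t n * (x n ^ 2 - 1) := by
    have h1 : ∀ᶠ n in atTop, D n < 1/6 := hD0.eventually (gt_mem_nhds (by norm_num))
    have h2 : ∀ᶠ n in atTop, x n ^ 2 - 1 < 1/2 := hu0.eventually (gt_mem_nhds (by norm_num))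
    filter_upwards [h1, h2] with n hdsmall husmall
    set y := x n with hy
    set d := 2 * D n with hdd
    set u := x n ^ 2 - 1 with hud
    have hd0 : 0 < d := by simp only [hdd]; linarith [hD n]
    have hd3 : d ≤ 1/3 := by simp only [hdd]; linarith
    have hu0' : 0 < u := hu n
    have hy1 : 1 < y := hx n
    have hy0 : 0 < y := lt_trans one_pos hy1
    have hyd : 1 < y ^ d :=
      (Real.one_lt_rpow_iff_of_pos hy0).mpr (Or.inl ⟨hy1, hd0⟩)
    -- y ^ d - 1 ≤ u
    have hyd2 : y ^ d - 1 ≤ u := by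
      have h := Real.rpow_le_rpow_of_exponent_le hy1.le (show d ≤ (2:ℝ) by linarith)
      have h2' : y ^ (2:ℝ) = y ^ (2:ℕ) := by
        rw [← Real.rpow_natCast y 2]; norm_num
      rw [h2'] at h
      simp only [hud]; linarith
    -- lower bound on the bracket
    have hbr : 4 * u ^ d / u ≤ ((y ^ d + 3) * u ^ d) / (y ^ d - 1) := by
      exact div_le_div₀ (by positivity)
        (by nlinarith [Real.rpow_pos_of_pos hu0' d]) (by linarith) hyd2
    have hpow : (4 * u ^ d / u) ^ (1/d) ≤
        (((y ^ d + 3) * u ^ d) / (y ^ d - 1)) ^ (1/d) :=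
      Real.rpow_le_rpow (by positivity) hbr (by positivity)
    -- compute the left side
    have hlhs : (4 * u ^ d / u) ^ (1/d) = 4 ^ (1/d) * u ^ ((d - 1) * (1/d)) := by
      have h1' : 4 * u ^ d / u = 4 * u ^ (d - 1) := by
        rw [Real.rpow_sub hu0', Real.rpow_one]; ring
      rw [h1', Real.mul_rpow (by norm_num) (Real.rpow_pos_of_pos hu0' _).le,
        ← Real.rpow_mul hu0'.le]
    have ht' : ρ * (4 ^ (1/d) * u ^ ((d - 1) * (1/d))) ≤ t n := by
      calc ρ * (4 ^ (1/d) * u ^ ((d - 1) * (1/d)))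
          = ρ * (4 * u ^ d / u) ^ (1/d) := by rw [hlhs]
        _ ≤ ρ * (((y ^ d + 3) * u ^ d) / (y ^ d - 1)) ^ (1/d) := by
            exact mul_le_mul_of_nonneg_left hpow hρ.le
        _ ≤ t n := ht n
    -- bound 4 ^ (1/d) ≥ 1 and u ^ e ≥ 1 / u ^ 2
    have h4 : (1:ℝ) ≤ 4 ^ (1/d) := by
      have := Real.rpow_le_rpow_of_exponent_le (show (1:ℝ) ≤ 4 by norm_num)
        (show (0:ℝ) ≤ 1/d by positivity)
      simpa using this
    have hue : 1 / u ^ 2 ≤ u ^ ((d - 1) * (1/d)) := by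
      have hexp : (d - 1) * (1/d) ≤ (-2 : ℝ) := by
        rw [sub_mul, one_mul, mul_one_div, div_self hd0.ne']
        have : 3 ≤ 1/d := by
          rw [le_div_iff₀ hd0]; linarith
        linarith
      have h := Real.rpow_le_rpow_of_exponent_ge hu0'
        (by simp only [hud]; linarith) hexp
      have hneg2 : u ^ ((-2:ℝ)) = 1 / u ^ 2 := by
        rw [Real.rpow_neg hu0'.le]
        rw [show ((2:ℝ)) = ((2:ℕ):ℝ) by norm_num, Real.rpow_natCast]
        rw [one_div]
      rw [hneg2] at h
      exact h
    -- conclude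
    have hupos2 : (0:ℝ) < u ^ 2 := by positivity
    have huepos : 0 < u ^ ((d - 1) * (1/d)) := Real.rpow_pos_of_pos hu0' _
    rw [div_le_iff₀ hu0']
    have key : (1:ℝ) ≤ u ^ ((d - 1) * (1/d)) * u ^ 2 := (div_le_iff₀ hupos2).mp hue
    have h6 : (1:ℝ) ≤ 4 ^ (1/d) * (u ^ ((d - 1) * (1/d)) * u ^ 2) :=
      key.trans (le_mul_of_one_le_left (by positivity) h4)
    calc ρ ≤ ρ * (4 ^ (1/d) * (u ^ ((d - 1) * (1/d)) * u ^ 2)) :=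
          le_mul_of_one_le_right hρ.le h6
      _ = ρ * (4 ^ (1/d) * u ^ ((d - 1) * (1/d))) * u ^ 2 := by ring
      _ ≤ t n * u ^ 2 := mul_le_mul_of_nonneg_right ht' hupos2.le
      _ = t n * u * u := by ring
  have hinv : Tendsto (fun n => ρ / (x n ^ 2 - 1)) atTop atTop := by
    have hnw : Tendsto (fun n => x n ^ 2 - 1) atTop (nhdsWithin 0 (Set.Ioi 0)) := by
      apply tendsto_nhdsWithin_of_tendsto_nhds_of_eventually_within _ hu0
      exact Eventually.of_forall fun n => hu n
    have := hnw.inv_tendsto_nhdsGT_zero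
    simpa [div_eq_mul_inv] using this.const_mul_atTop hρ
  have hinf : Tendsto (fun n => t n * (x n ^ 2 - 1)) atTop atTop :=
    tendsto_atTop_mono' _ hmain hinv
  refine ⟨?_, hinf⟩
  simpa only [one_div, Pi.inv_apply, Pi.inv_def] using hinf.inv_tendsto_atTop
end
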